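/- The discrete Laplacian −Δ_h on ℓ²(ℤ, ℂ) has no eigenvalues: for every μ ∈ ℂ there is no nonzero φ ∈ ℓ²(ℤ, ℂ) with (−Δ_h)φ = μ·φ. -/

import Mathlib

/-- The discrete Laplacian `−Δ_h` on `ℓ²(ℤ, ℂ)` has no eigenvalues. -/
theorem stmt_1 (h : ℝ) (hh : 0 < h)
    (H : lp (fun _ : ℤ => ℂ) 2 →L[ℂ] lp (fun _ : ℤ => ℂ) 2)
    (hH : ∀ (φ : lp (fun _ : ℤ => ℂ) 2) (n : ℤ),
      H φ n = ((h : ℂ) ^ 2)⁻¹ * (2 * φ n - φ (n + 1) - φ (n - 1))) :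
    ∀ μ : ℂ, ¬ ∃ φ : lp (fun _ : ℤ => ℂ) 2, φ ≠ 0 ∧ H φ = μ • φ := by
  intro μ
  rintro ⟨φ, hφ0, hμ⟩
  set ψ : ℤ → ℂ := fun n => φ n with hψ
  set c : ℂ := 2 - μ * (h : ℂ) ^ 2 with hc
  have hh2 : ((h : ℂ) ^ 2) ≠ 0 :=
    pow_ne_zero 2 (Complex.ofReal_ne_zero.mpr hh.ne')
  -- the recurrence
  have hrec : ∀ n : ℤ, ψ (n + 1) + ψ (n - 1) = c * ψ n := by
    intro n
    have h1 : ((h : ℂ) ^ 2)⁻¹ * (2 * ψ n - ψ (n + 1) - ψ (n - 1)) = μ * ψ n := by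
      rw [← hH φ n, hμ]
      simp [hψ]
    field_simp at h1
    rw [div_eq_iff hh2] at h1
    rw [hc]
    linear_combination -h1
  -- φ tends to 0 along cofinite
  have hmem : Memℓp ψ 2 := φ.prop
  have hsum : Summable (fun n : ℤ => ‖ψ n‖ ^ (2 : ℝ)) := hmem.summable (by norm_num)
  have h0 : Filter.Tendsto ψ Filter.cofinite (nhds 0) := by
    rw [tendsto_zero_iff_norm_tendsto_zero]
    have h1 := hsum.tendsto_cofinite_zero
    have h2 : Filter.Tendsto (fun n : ℤ => Real.sqrt (‖ψ n‖ ^ (2 : ℝ)))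
        Filter.cofinite (nhds (Real.sqrt 0)) :=
      (Real.continuous_sqrt.tendsto 0).comp h1
    have h3 : (fun n : ℤ => Real.sqrt (‖ψ n‖ ^ (2 : ℝ))) = fun n : ℤ => ‖ψ n‖ := by
      funext n
      rw [show ((2 : ℝ)) = ((2 : ℕ) : ℝ) by norm_num, Real.rpow_natCast,
        Real.sqrt_sq (norm_nonneg _)]
    rw [h3, Real.sqrt_zero] at h2
    exact h2
  have htend : ∀ f : ℕ → ℤ, Function.Injective f →
      Filter.Tendsto (fun n => ψ (f n)) Filter.atTop (nhds 0) := by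
    intro f hf
    have := h0.comp hf.tendsto_cofinite
    rwa [Nat.cofinite_eq_atTop] at this
  -- Wronskian is constant
  set W : ℤ → ℂ := fun n => ψ (n + 1) ^ 2 - ψ n * ψ (n + 2) with hW
  have hWstep : ∀ n : ℤ, W (n + 1) = W n := by
    intro n
    have e1 := hrec (n + 1)
    have e2 := hrec (n + 2)
    have a1 : n + 1 + 1 = n + 2 := by ring
    have a2 : n + 1 - 1 = n := by ring
    have a3 : n + 2 + 1 = n + 3 := by ring
    have a4 : n + 2 - 1 = n + 1 := by ring
    have a5 : n + 1 + 2 = n + 3 := by ring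
    rw [a1, a2] at e1
    rw [a3, a4] at e2
    simp only [hW, a1, a5]
    linear_combination (ψ (n + 2)) * e1 - (ψ (n + 1)) * e2
  have hWconst : ∀ n : ℤ, W n = W 0 := by
    intro n
    induction n using Int.induction_on with
    | zero => rfl
    | succ k ih => rw [hWstep k, ih]
    | pred k ih =>
      have hs := hWstep (-(k : ℤ) - 1)
      have a : -(k : ℤ) - 1 + 1 = -(k : ℤ) := by ring
      rw [a] at hs
      rw [← hs, ih]
  -- Wronskian tends to 0, hence is 0
  have hWzero : ∀ n : ℤ, ψ (n + 1) ^ 2 = ψ n * ψ (n + 2) := by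
    have t1 := htend (fun k : ℕ => (k : ℤ) + 1)
      (fun a b hab => by simp only at hab; omega)
    have t0 := htend (fun k : ℕ => (k : ℤ))
      (fun a b hab => by simp only at hab; omega)
    have t2 := htend (fun k : ℕ => (k : ℤ) + 2)
      (fun a b hab => by simp only at hab; omega)
    have tW : Filter.Tendsto (fun k : ℕ => W (k : ℤ)) Filter.atTop (nhds 0) := by
      have : Filter.Tendsto (fun k : ℕ => ψ ((k : ℤ) + 1) ^ 2 - ψ (k : ℤ) * ψ ((k : ℤ) + 2))
          Filter.atTop (nhds (0 ^ 2 - 0 * 0)) := ((t1.pow 2).sub (t0.mul t2))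
      simpa [hW] using this
    have tWc : Filter.Tendsto (fun k : ℕ => W (k : ℤ)) Filter.atTop (nhds (W 0)) := by
      simpa [hWconst] using (tendsto_const_nhds :
        Filter.Tendsto (fun _ : ℕ => W 0) Filter.atTop (nhds (W 0)))
    have hW0 : W 0 = 0 := tendsto_nhds_unique tWc tW
    intro n
    have := hWconst n
    rw [hW0] at this
    simp only [hW] at this
    linear_combination this
  -- φ is nonzero somewhere
  obtain ⟨m, hm⟩ : ∃ m : ℤ, ψ m ≠ 0 := by
    by_contra hcon
    push_neg at hcon
    apply hφ0
    ext n
    exact hcon n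
  -- φ is nonzero everywhere
  have hne : ∀ n : ℤ, ψ n ≠ 0 := by
    have key : ∀ k : ℤ, ψ (m + k) ≠ 0 := by
      intro k
      induction k using Int.induction_on with
      | zero => simpa using hm
      | succ k ih =>
        intro hz
        have hq := hWzero (m + k - 1)
        have a1 : m + (k : ℤ) - 1 + 1 = m + k := by ring
        have a2 : m + (k : ℤ) - 1 + 2 = m + (k + 1) := by ring
        rw [a1, a2, hz, mul_zero, pow_eq_zero_iff (by norm_num)] at hq
        exact ih hq
      | pred k ih =>
        intro hz
        have hq := hWzero (m + (-(k : ℤ) - 1))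
        have a1 : m + (-(k : ℤ) - 1) + 1 = m + (-(k : ℤ)) := by ring
        rw [a1, hz, zero_mul, pow_eq_zero_iff (by norm_num)] at hq
        exact ih hq
    intro n
    have := key (n - m)
    simpa using this
  -- constant ratio: ψ(m+k+1) * ψ m = ψ(m+k) * ψ(m+1)
  have hR : ∀ k : ℤ, ψ (m + k + 1) * ψ m = ψ (m + k) * ψ (m + 1) := by
    intro k
    induction k using Int.induction_on with
    | zero => simp [mul_comm]
    | succ k ih =>
      have hq := hWzero (m + k)
      have a1 : m + ((k : ℤ) + 1) + 1 = m + k + 2 := by ring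
      have a2 : m + ((k : ℤ) + 1) = m + k + 1 := by ring
      rw [a1, a2]
      have hcan : ψ (m + (k : ℤ) + 1) * (ψ (m + (k : ℤ) + 2) * ψ m) =
          ψ (m + (k : ℤ) + 1) * (ψ (m + (k : ℤ) + 1) * ψ (m + 1)) := by
        calc ψ (m + (k : ℤ) + 1) * (ψ (m + (k : ℤ) + 2) * ψ m)
            = ψ (m + (k : ℤ) + 2) * (ψ (m + (k : ℤ) + 1) * ψ m) := by ring
          _ = ψ (m + (k : ℤ) + 2) * (ψ (m + (k : ℤ)) * ψ (m + 1)) := by rw [ih]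
          _ = (ψ (m + (k : ℤ)) * ψ (m + (k : ℤ) + 2)) * ψ (m + 1) := by ring
          _ = ψ (m + (k : ℤ) + 1) ^ 2 * ψ (m + 1) := by rw [← hq]
          _ = ψ (m + (k : ℤ) + 1) * (ψ (m + (k : ℤ) + 1) * ψ (m + 1)) := by ring
      exact mul_left_cancel₀ (hne _) hcan
    | pred k ih =>
      have hq := hWzero (m + (-(k : ℤ) - 1))
      have a1 : m + (-(k : ℤ) - 1) + 1 = m + (-(k : ℤ)) := by ring
      have a2 : m + (-(k : ℤ) - 1) + 2 = m + (-(k : ℤ)) + 1 := by ring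
      rw [a1, a2] at hq
      rw [a1]
      have hcan : ψ (m + (-(k : ℤ)) + 1) * (ψ (m + (-(k : ℤ))) * ψ m) =
          ψ (m + (-(k : ℤ)) + 1) * (ψ (m + (-(k : ℤ) - 1)) * ψ (m + 1)) := by
        calc ψ (m + (-(k : ℤ)) + 1) * (ψ (m + (-(k : ℤ))) * ψ m)
            = ψ (m + (-(k : ℤ))) * (ψ (m + (-(k : ℤ)) + 1) * ψ m) := by ring
          _ = ψ (m + (-(k : ℤ))) * (ψ (m + (-(k : ℤ))) * ψ (m + 1)) := by rw [ih]
          _ = ψ (m + (-(k : ℤ))) ^ 2 * ψ (m + 1) := by ring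
          _ = ψ (m + (-(k : ℤ) - 1)) * ψ (m + (-(k : ℤ)) + 1) * ψ (m + 1) := by rw [hq]
          _ = ψ (m + (-(k : ℤ)) + 1) * (ψ (m + (-(k : ℤ) - 1)) * ψ (m + 1)) := by ring
      exact mul_left_cancel₀ (hne _) hcan
  -- the product ψ(m+k) ψ(m−k) is constant
  have hP : ∀ k : ℕ, ψ (m + (k : ℤ)) * ψ (m - (k : ℤ)) = ψ m ^ 2 := by
    intro k
    induction k with
    | zero => simp only [Nat.cast_zero, add_zero, sub_zero]; ring
    | succ k ih =>
      have r1 := hR (k : ℤ)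
      have r2 := hR (-(k : ℤ) - 1)
      have a1 : m + (-(k : ℤ) - 1) + 1 = m - (k : ℤ) := by ring
      have a2 : m + (-(k : ℤ) - 1) = m - ((k : ℤ) + 1) := by ring
      rw [a1, a2] at r2
      -- r2 : ψ (m - k) * ψ m = ψ (m - (k+1)) * ψ (m+1)
      have a3 : m + ((k : ℤ) + 1) = m + (k : ℤ) + 1 := by ring
      push_cast
      rw [a3]
      have hcan : (ψ m * ψ (m + 1)) * (ψ (m + (k : ℤ) + 1) * ψ (m - ((k : ℤ) + 1))) =
          (ψ m * ψ (m + 1)) * (ψ m ^ 2) := by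
        calc (ψ m * ψ (m + 1)) * (ψ (m + (k : ℤ) + 1) * ψ (m - ((k : ℤ) + 1)))
            = (ψ (m + (k : ℤ) + 1) * ψ m) * (ψ (m - ((k : ℤ) + 1)) * ψ (m + 1)) := by ring
          _ = (ψ (m + (k : ℤ)) * ψ (m + 1)) * (ψ (m - (k : ℤ)) * ψ m) := by rw [r1, ← r2]
          _ = (ψ m * ψ (m + 1)) * (ψ (m + (k : ℤ)) * ψ (m - (k : ℤ))) := by ring
          _ = (ψ m * ψ (m + 1)) * (ψ m ^ 2) := by rw [ih]
      exact mul_left_cancel₀ (mul_ne_zero (hne m) (hne (m + 1))) hcan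
  -- but the product tends to 0
  have tplus := htend (fun k : ℕ => m + (k : ℤ))
    (fun a b hab => by simp only at hab; omega)
  have tminus := htend (fun k : ℕ => m - (k : ℤ))
    (fun a b hab => by simp only at hab; omega)
  have tprod : Filter.Tendsto (fun k : ℕ => ψ (m + (k : ℤ)) * ψ (m - (k : ℤ)))
      Filter.atTop (nhds 0) := by
    simpa using tplus.mul tminus
  have tconst : Filter.Tendsto (fun k : ℕ => ψ (m + (k : ℤ)) * ψ (m - (k : ℤ)))
      Filter.atTop (nhds (ψ m ^ 2)) := by
    simpa [hP] using (tendsto_const_nhds :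
      Filter.Tendsto (fun _ : ℕ => ψ m ^ 2) Filter.atTop (nhds (ψ m ^ 2)))
  have : ψ m ^ 2 = 0 := tendsto_nhds_unique tconst tprod
  exact hm (by simpa [pow_eq_zero_iff] using this)
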